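/- Let (x_k), (y_k) be generated by the Chambolle–Pock iteration x_{k+1} = prox_{τf}(x_k − τ L* y_k), y_{k+1} = prox_{σ g*}(y_k + σ L(x_{k+1} + θ(x_{k+1} − x_k))), with θ ≥ 1/2 and τ, σ > 0 satisfying τσ‖L‖² ≤ 4/(1 + 2θ), at least one of these two inequalities being strict, and let (x⋆, y⋆) be a KKT point (−L*y⋆ ∈ ∂f(x⋆), Lx⋆ ∈ ∂g*(y⋆)). Define F_k = f(x_{k+1}) − f(x⋆) + ⟨L*y⋆, x_{k+1} − x⋆⟩, G_k = g*(y_{k+1}) − g*(y⋆) − ⟨Lx⋆, y_{k+1} − y⋆⟩, and V_k = θF_k + (1/2τ)‖x_{k+1} − x⋆‖² + (1/2σ)‖y_k − y⋆ + σθ(Lx_{k+1} − Lx_k)‖² + (θ/2τ)‖x_{k+1} − x_k‖² − (σ(4θ²+1)/16)‖Lx_{k+1} − Lx_k‖². Then for every positive integer K, 0 ≤ ∑_{k=0}^{K−1} (F_k + G_k) ≤ V₀; in particular, the series ∑_{k=0}^{∞} (F_k + G_k) converges and is bounded by V₀. -/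

import Mathlib

open scoped RealInnerProductSpace
open Filter Topology

noncomputable section

/-- The convex subdifferential of an extended-real-valued function:
`∂f(x) = { u : ∀ z, f z ≥ f x + ⟪u, z - x⟫ }`. -/
def ESubdiff {E : Type*} [NormedAddCommGroup E] [InnerProductSpace ℝ E]
    (f : E → EReal) (x : E) : Set E :=
  {u | ∀ z : E, f x + ((⟪u, z - x⟫ : ℝ) : EReal) ≤ f z}

/-- Properness of an extended-real-valued function: it never takes the value `⊥`
and is not identically `⊤`. -/
def EProper {E : Type*} (f : E → EReal) : Prop :=
  (∃ x, f x ≠ ⊤) ∧ ∀ x, f x ≠ ⊥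

/-- Convexity of an extended-real-valued function. -/
def EConvex {E : Type*} [NormedAddCommGroup E] [NormedSpace ℝ E] (f : E → EReal) : Prop :=
  ∀ x y : E, ∀ a b : ℝ, 0 ≤ a → 0 ≤ b → a + b = 1 →
    f (a • x + b • y) ≤ (a : EReal) * f x + (b : EReal) * f y

/-- The convex (Fenchel) conjugate `g*(y) = sup_x (⟪x, y⟫ - g x)`. -/
def EConj {E : Type*} [NormedAddCommGroup E] [InnerProductSpace ℝ E]
    (g : E → EReal) (y : E) : EReal :=
  ⨆ x : E, ((⟪x, y⟫ : ℝ) : EReal) - g x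

/-- `IsProx τ f x p` states that `p = prox_{τ f}(x)`, i.e. `p` minimizes
`fun z => f z + (1/(2τ)) ‖z - x‖²`. -/
def IsProx {E : Type*} [NormedAddCommGroup E] [InnerProductSpace ℝ E]
    (τ : ℝ) (f : E → EReal) (x p : E) : Prop :=
  ∀ z : E, f p + ((1 / (2 * τ) * ‖p - x‖ ^ 2 : ℝ) : EReal)
      ≤ f z + ((1 / (2 * τ) * ‖z - x‖ ^ 2 : ℝ) : EReal)

/-- The Lagrangian `𝓛(x, y) = f x + ⟪y, L x⟫ - g*(y)` of the saddle-point problem. -/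
def Lagr {E F : Type*} [NormedAddCommGroup E] [InnerProductSpace ℝ E]
    [NormedAddCommGroup F] [InnerProductSpace ℝ F]
    (f : E → EReal) (gs : F → EReal) (L : E →L[ℝ] F) (x : E) (y : F) : EReal :=
  f x + ((⟪y, L x⟫ : ℝ) : EReal) - gs y


set_option maxHeartbeats 1000000 in
lemma cp_cert (σ θ ℓ A B : ℝ) (hσ : 0 < σ) (hθ : 1 / 2 ≤ θ) (hℓ : 0 ≤ ℓ) (hA : 0 ≤ A)
    (h4A : σ * ℓ ^ 2 * (2 * θ + 1) ≤ 4 * A)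
    (Frk Frk1 Grk aa ab bb bp pp qq rr rs ss sLa sLb sLp rLa rLb LaLa LaLb LbLb : ℝ)
    (hqq : qq = pp + 2 * bp + bb)
    (hE1 : bb * A + sLb ≤ Frk - Frk1)
    (hE2 : Frk1 ≤ (pp - bb - qq) * A / 2 - (sLp + sLb))
    (hE3 : Grk ≤ (rs - ss) * B + sLp + θ * sLa)
    (hE5 : -(ab * A) - rLb ≤ Frk1 - Frk)
    (hY : 0 ≤ (rr - 2 * rs + ss) * B / 2 + σ * θ ^ 2 / 2 * LaLa + σ / 8 * LbLb
        - θ * (sLa - rLa) + (sLb - rLb) / 2 - σ * θ / 2 * LaLb)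
    (hu : 0 ≤ aa + 2 * ab + bb) (hv : 0 ≤ aa - 2 * ab + bb)
    (hcsu : LaLa + 2 * LaLb + LbLb ≤ ℓ ^ 2 * (aa + 2 * ab + bb))
    (hcsv : LaLa - 2 * LaLb + LbLb ≤ ℓ ^ 2 * (aa - 2 * ab + bb)) :
    Frk + Grk + (θ * Frk1 + A / 2 * qq + B / 2 * ss + θ * sLb
        + σ * θ ^ 2 / 2 * LbLb + θ * A / 2 * bb - σ * (4 * θ ^ 2 + 1) / 16 * LbLb)
      ≤ θ * Frk + A / 2 * pp + B / 2 * rr + θ * rLa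
        + σ * θ ^ 2 / 2 * LaLa + θ * A / 2 * aa - σ * (4 * θ ^ 2 + 1) / 16 * LaLa := by
  have hσℓ : 0 ≤ σ * ℓ ^ 2 := by positivity
  have h4A' : σ * ℓ ^ 2 * (2 * θ - 1) ≤ 4 * A := by nlinarith
  have t1 : 0 ≤ (θ - 1 / 2) * ((Frk - Frk1) - (bb * A + sLb)) :=
    mul_nonneg (by linarith) (by linarith)
  have t5 : 0 ≤ (1 / 2) * ((Frk1 - Frk) - (-(ab * A) - rLb)) :=
    mul_nonneg (by norm_num) (by linarith)
  have t6 : 0 ≤ σ * (2 * θ - 1) ^ 2 / 32 * (ℓ ^ 2 * (aa + 2 * ab + bb) - (LaLa + 2 * LaLb + LbLb)) :=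
    mul_nonneg (by positivity) (by linarith)
  have t7 : 0 ≤ σ * (2 * θ + 1) ^ 2 / 32 * (ℓ ^ 2 * (aa - 2 * ab + bb) - (LaLa - 2 * LaLb + LbLb)) :=
    mul_nonneg (by positivity) (by linarith)
  have t8 : 0 ≤ (2 * θ - 1) / 32 * (4 * A - σ * ℓ ^ 2 * (2 * θ - 1)) * (aa + 2 * ab + bb) :=
    mul_nonneg (mul_nonneg (by linarith) (by linarith)) hu
  have t9 : 0 ≤ (2 * θ + 1) / 32 * (4 * A - σ * ℓ ^ 2 * (2 * θ + 1)) * (aa - 2 * ab + bb) :=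
    mul_nonneg (mul_nonneg (by linarith) (by linarith)) hv
  subst hqq
  linarith [t1, t5, t6, t7, t8, t9, hE2, hE3, hY]


lemma cp_Vnonneg (σ θ ℓ A B : ℝ) (hσ : 0 < σ) (hθ : 1 / 2 ≤ θ) (hA : 0 ≤ A) (hB : 0 ≤ B)
    (h4A : σ * ℓ ^ 2 * (2 * θ + 1) ≤ 4 * A)
    (Frk aa pp yy LaLa : ℝ) (hF : 0 ≤ Frk) (haa : 0 ≤ aa) (hpp : 0 ≤ pp) (hyy : 0 ≤ yy)
    (hcs : LaLa ≤ ℓ ^ 2 * aa) :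
    0 ≤ θ * Frk + A / 2 * pp + B / 2 * yy + θ * A / 2 * aa
        - σ * (4 * θ ^ 2 + 1) / 16 * LaLa := by
  have hσℓ : 0 ≤ σ * ℓ ^ 2 := by positivity
  have h2 : σ * ℓ ^ 2 * (4 * θ ^ 2 + 1) ≤ 8 * θ * A := by nlinarith
  have h1 : σ * (4 * θ ^ 2 + 1) / 16 * LaLa ≤ σ * (4 * θ ^ 2 + 1) / 16 * (ℓ ^ 2 * aa) :=
    mul_le_mul_of_nonneg_left hcs (by positivity)
  have h3 : σ * (4 * θ ^ 2 + 1) / 16 * (ℓ ^ 2 * aa) ≤ θ * A / 2 * aa := by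
    have h4 := mul_le_mul_of_nonneg_right (by linarith : σ * ℓ ^ 2 * (4 * θ ^ 2 + 1) / 16 ≤ θ * A / 2) haa
    nlinarith [h4]
  have h5 : 0 ≤ θ * Frk := mul_nonneg (by linarith) hF
  nlinarith [mul_nonneg hA hpp, mul_nonneg hB hyy]
/-- prox point of a convex function is a subgradient point. -/
lemma prox_subgrad {E : Type*} [NormedAddCommGroup E] [InnerProductSpace ℝ E]
    {τ : ℝ} (hτ : 0 < τ) {h : E → EReal} (hconv : EConvex h) (hbot : ∀ z, h z ≠ ⊥)
    {w p : E} (hp : IsProx τ h w p) (hpt : h p ≠ ⊤) :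
    ∀ z : E, h p + ((⟪(1 / τ) • (w - p), z - p⟫ : ℝ) : EReal) ≤ h z := by
  have hc : (0:ℝ) < 1 / (2 * τ) := by positivity
  have h2c : 1 / τ = 2 * (1 / (2 * τ)) := by field_simp
  intro z
  by_cases hzt : h z = ⊤
  · rw [hzt]; exact le_top
  set pr := (h p).toReal with hpr
  have hpe : h p = (pr : EReal) := (EReal.coe_toReal hpt (hbot p)).symm
  set zr := (h z).toReal with hzr
  have hze : h z = (zr : EReal) := (EReal.coe_toReal hzt (hbot z)).symm
  rw [hpe, hze, ← EReal.coe_add, EReal.coe_le_coe_iff]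
  set c := 1 / (2 * τ) with hcdef
  set I := ⟪p - w, z - p⟫ with hI
  set Z := ‖z - p‖ ^ 2 with hZ
  have key : ∀ t : ℝ, 0 < t → t ≤ 1 → pr ≤ zr + 2 * c * I + t * (c * Z) := by
    intro t ht ht1
    have hcv := hconv p z (1 - t) t (by linarith) ht.le (by ring)
    have hprox := hp ((1 - t) • p + t • z)
    have hzt_le : h ((1 - t) • p + t • z) ≤ (((1 - t) * pr + t * zr : ℝ) : EReal) := by
      rw [EReal.coe_add, EReal.coe_mul, EReal.coe_mul, ← hpe, ← hze]
      exact hcv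
    have hzt_ne_top : h ((1 - t) • p + t • z) ≠ ⊤ := by
      intro hh; rw [hh] at hzt_le; exact (EReal.coe_ne_top _) (top_le_iff.mp hzt_le)
    set cr := (h ((1 - t) • p + t • z)).toReal with hcr
    have hce : h ((1 - t) • p + t • z) = (cr : EReal) :=
      (EReal.coe_toReal hzt_ne_top (hbot _)).symm
    rw [hpe, hce, ← EReal.coe_add, ← EReal.coe_add, EReal.coe_le_coe_iff] at hprox
    rw [hce, EReal.coe_le_coe_iff] at hzt_le
    have hexp : ‖(1 - t) • p + t • z - w‖ ^ 2
        = ‖p - w‖ ^ 2 + 2 * (t * I) + t ^ 2 * Z := by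
      have hvec : (1 - t) • p + t • z - w = (p - w) + t • (z - p) := by
        rw [sub_smul, one_smul, smul_sub]; abel
      rw [hvec, norm_add_sq_real, real_inner_smul_right, norm_smul,
        Real.norm_eq_abs, mul_pow, sq_abs]
    rw [hexp] at hprox
    have h3 : t * pr ≤ t * zr + 2 * t * c * I + t ^ 2 * c * Z := by nlinarith [hprox, hzt_le]
    have h4 : t * pr ≤ t * (zr + 2 * c * I + t * (c * Z)) := by nlinarith [h3]
    exact (mul_le_mul_iff_right₀ ht).mp h4
  have hZnn : (0:ℝ) ≤ c * Z := by positivity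
  have hfin : pr ≤ zr + 2 * c * I := by
    by_contra hcon
    push_neg at hcon
    have hεpos : 0 < pr - (zr + 2 * c * I) := sub_pos.mpr hcon
    set ε := pr - (zr + 2 * c * I) with hε
    have ht := key (min 1 (ε / (c * Z + 1))) (lt_min one_pos (by positivity)) (min_le_left _ _)
    have hm : min 1 (ε / (c * Z + 1)) * (c * Z) ≤ (ε / (c * Z + 1)) * (c * Z) :=
      mul_le_mul_of_nonneg_right (min_le_right _ _) hZnn
    have h5 : (ε / (c * Z + 1)) * (c * Z) < ε := by
      rw [div_mul_eq_mul_div, div_lt_iff₀ (by linarith)]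
      nlinarith
    linarith
  have hinner : ⟪(1 / τ) • (w - p), z - p⟫ = -(2 * c * I) := by
    rw [real_inner_smul_left, show w - p = -(p - w) by abel, inner_neg_left, h2c, hI]
    ring
  rw [hinner]
  linarith
lemma econj_ne_bot {E : Type*} [NormedAddCommGroup E] [InnerProductSpace ℝ E]
    {g : E → EReal} (hg : EProper g) (y : E) : EConj g y ≠ ⊥ := by
  obtain ⟨x₀, hx₀⟩ := hg.1
  have hb := hg.2 x₀
  have hr : g x₀ = ((g x₀).toReal : EReal) := (EReal.coe_toReal hx₀ hb).symm
  have hle : ((⟪x₀, y⟫ - (g x₀).toReal : ℝ) : EReal) ≤ EConj g y := by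
    rw [EReal.coe_sub]
    calc ((⟪x₀, y⟫ : ℝ) : EReal) - ((g x₀).toReal : EReal)
        = ((⟪x₀, y⟫ : ℝ) : EReal) - g x₀ := by rw [← hr]
      _ ≤ _ := le_iSup (fun x => ((⟪x, y⟫ : ℝ) : EReal) - g x) x₀
  intro hbot
  rw [hbot, le_bot_iff] at hle
  exact EReal.coe_ne_bot _ hle

lemma econj_convex {E : Type*} [NormedAddCommGroup E] [InnerProductSpace ℝ E]
    {g : E → EReal} (hg : ∀ x, g x ≠ ⊥) : EConvex (EConj g) := by
  intro y₁ y₂ a b ha hb hab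
  rcases eq_or_lt_of_le ha with ha0 | hapos
  · have hb1 : b = 1 := by linarith
    rw [← ha0, hb1]
    simp [EReal.zero_mul]
  rcases eq_or_lt_of_le hb with hb0 | hbpos
  · have ha1 : a = 1 := by linarith
    rw [← hb0, ha1]
    simp [EReal.zero_mul]
  apply iSup_le
  intro x
  have hterm : ((⟪x, a • y₁ + b • y₂⟫ : ℝ) : EReal) - g x
      ≤ (a : EReal) * (((⟪x, y₁⟫ : ℝ) : EReal) - g x)
        + (b : EReal) * (((⟪x, y₂⟫ : ℝ) : EReal) - g x) := by
    by_cases hx : g x = ⊤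
    · rw [hx]
      have h1 : ∀ r : ℝ, ((r : EReal)) - ⊤ = ⊥ := by
        intro r; rw [sub_eq_add_neg]; simp
      rw [h1, h1, h1]
      have h2 : ∀ c : ℝ, 0 < c → (c : EReal) * ⊥ = ⊥ := by
        intro c hc
        rw [EReal.mul_bot_of_pos]; exact_mod_cast hc
      rw [h2 a hapos, h2 b hbpos]
      simp
    · have hgr : g x = ((g x).toReal : EReal) := (EReal.coe_toReal hx (hg x)).symm
      rw [hgr, ← EReal.coe_sub, ← EReal.coe_sub, ← EReal.coe_sub, ← EReal.coe_mul,
        ← EReal.coe_mul, ← EReal.coe_add, EReal.coe_le_coe_iff,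
        inner_add_right, real_inner_smul_right, real_inner_smul_right]
      have hb1 : b = 1 - a := by linarith
      rw [hb1]; exact le_of_eq (by ring)
  refine hterm.trans (add_le_add ?_ ?_)
  · exact mul_le_mul_of_nonneg_left (le_iSup (fun x => ((⟪x, y₁⟫ : ℝ) : EReal) - g x) x)
      (by exact_mod_cast ha)
  · exact mul_le_mul_of_nonneg_left (le_iSup (fun x => ((⟪x, y₂⟫ : ℝ) : EReal) - g x) x)
      (by exact_mod_cast hb)
lemma econj_exists_ne_top {E : Type*} [NormedAddCommGroup E] [InnerProductSpace ℝ E]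
    [CompleteSpace E] {g : E → EReal} (hg₁ : EProper g) (hg₂ : EConvex g)
    (hg₃ : LowerSemicontinuous g) : ∃ y : E, EConj g y ≠ ⊤ := by
  classical
  obtain ⟨x₀, hx₀⟩ := hg₁.1
  have hb₀ := hg₁.2 x₀
  set g₀ := (g x₀).toReal with hg₀
  have hg₀e : g x₀ = (g₀ : EReal) := (EReal.coe_toReal hx₀ hb₀).symm
  set S : Set (E × ℝ) := {q | g q.1 ≤ (q.2 : EReal)} with hSdef
  -- S is convex
  have hSconv : Convex ℝ S := by
    rintro ⟨x₁, t₁⟩ h₁ ⟨x₂, t₂⟩ h₂ a b ha hb hab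
    simp only [hSdef, Set.mem_setOf_eq] at h₁ h₂ ⊢
    have hx₁t : g x₁ ≠ ⊤ := fun hh => by rw [hh] at h₁; exact (EReal.coe_ne_top t₁) (top_le_iff.mp h₁)
    have hx₂t : g x₂ ≠ ⊤ := fun hh => by rw [hh] at h₂; exact (EReal.coe_ne_top t₂) (top_le_iff.mp h₂)
    have he₁ : g x₁ = ((g x₁).toReal : EReal) := (EReal.coe_toReal hx₁t (hg₁.2 x₁)).symm
    have he₂ : g x₂ = ((g x₂).toReal : EReal) := (EReal.coe_toReal hx₂t (hg₁.2 x₂)).symm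
    rw [he₁, EReal.coe_le_coe_iff] at h₁
    rw [he₂, EReal.coe_le_coe_iff] at h₂
    calc g (a • x₁ + b • x₂) ≤ (a : EReal) * g x₁ + (b : EReal) * g x₂ := hg₂ x₁ x₂ a b ha hb hab
      _ = ((a * (g x₁).toReal + b * (g x₂).toReal : ℝ) : EReal) := by
          rw [EReal.coe_add, EReal.coe_mul, EReal.coe_mul, ← he₁, ← he₂]
      _ ≤ ((a * t₁ + b * t₂ : ℝ) : EReal) := by
          apply EReal.coe_le_coe_iff.mpr
          have := mul_le_mul_of_nonneg_left h₁ ha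
          have := mul_le_mul_of_nonneg_left h₂ hb
          linarith
  -- S is closed
  have hSclosed : IsClosed S := by
    rw [← isOpen_compl_iff]
    rw [isOpen_iff_mem_nhds]
    rintro ⟨qx, qt⟩ hq
    simp only [hSdef, Set.mem_compl_iff, Set.mem_setOf_eq, not_le] at hq
    obtain ⟨c, hc1, hc2⟩ := exists_between hq
    have hct : c ≠ ⊤ := hc2.ne_top
    have hcb : c ≠ ⊥ := fun hh => by rw [hh] at hc1; exact not_lt_bot hc1
    have hce : c = ((c.toReal : ℝ) : EReal) := (EReal.coe_toReal hct hcb).symm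
    have hqtc : qt < c.toReal := by
      rw [hce] at hc1; exact_mod_cast hc1
    have hev : {x' | c < g x'} ∈ 𝓝 qx := hg₃ qx c hc2
    rw [mem_nhds_prod_iff]
    refine ⟨{x' | c < g x'}, hev, Set.Iio c.toReal, Iio_mem_nhds hqtc, ?_⟩
    rintro ⟨x', t'⟩ ⟨hx', ht'⟩
    simp only [Set.mem_compl_iff, hSdef, Set.mem_setOf_eq, not_le]
    calc ((t' : ℝ) : EReal) < ((c.toReal : ℝ) : EReal) := by exact_mod_cast ht'
      _ = c := hce.symm
      _ < g x' := hx'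
  -- the point below the epigraph
  have hnotmem : ((x₀, g₀ - 1) : E × ℝ) ∉ S := by
    simp only [hSdef, Set.mem_setOf_eq, hg₀e, EReal.coe_le_coe_iff]
    linarith
  obtain ⟨φ, u, hφ₁, hφ₂⟩ := geometric_hahn_banach_point_closed hSconv hSclosed hnotmem
  -- decompose φ
  have hdec : ∀ (x : E) (t : ℝ), φ (x, t) = φ (x, 0) + t * φ (0, 1) := by
    intro x t
    have hxt : ((x, t) : E × ℝ) = (x, (0:ℝ)) + t • ((0:E), (1:ℝ)) := by
      simp [Prod.ext_iff]
    rw [hxt, map_add, map_smul, smul_eq_mul]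
  set β := φ (0, 1) with hβdef
  -- β is positive
  have hmemS : ∀ t : ℝ, g₀ ≤ t → ((x₀, t) : E × ℝ) ∈ S := by
    intro t ht
    simp only [hSdef, Set.mem_setOf_eq, hg₀e]
    exact_mod_cast ht
  have hβpos : 0 < β := by
    rcases lt_trichotomy β 0 with hneg | hzero | hpos
    · exfalso
      set t0 := max g₀ ((u - φ (x₀, 0)) / β) with ht0
      have hm := hφ₂ _ (hmemS t0 (le_max_left _ _))
      rw [hdec] at hm
      have ht0' : (u - φ (x₀, 0)) / β ≤ t0 := le_max_right _ _
      have : t0 * β ≤ ((u - φ (x₀, 0)) / β) * β :=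
        mul_le_mul_of_nonpos_right ht0' hneg.le
      rw [div_mul_cancel₀ _ (ne_of_lt hneg)] at this
      linarith
    · exfalso
      have hm := hφ₂ _ (hmemS g₀ le_rfl)
      rw [hdec] at hm
      have hφ₁' := hφ₁
      rw [hdec] at hφ₁'
      rw [hzero] at hm hφ₁'
      linarith
    · exact hpos
  -- Riesz representation of x ↦ φ (x, 0)
  set φ₀ : E →L[ℝ] ℝ := φ.comp (ContinuousLinearMap.inl ℝ E ℝ) with hφ₀def
  set w : E := (InnerProductSpace.toDual ℝ E).symm φ₀ with hwdef
  have hw : ∀ x : E, ⟪w, x⟫ = φ (x, 0) := by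
    intro x
    rw [hwdef]
    rw [InnerProductSpace.toDual_symm_apply]
    simp [hφ₀def]
  refine ⟨-(1 / β) • w, ?_⟩
  have hbound : EConj g (-(1 / β) • w) ≤ (((- u) / β : ℝ) : EReal) := by
    apply iSup_le
    intro x
    by_cases hx : g x = ⊤
    · rw [hx, sub_eq_add_neg]; simp
    · have hge : g x = ((g x).toReal : EReal) := (EReal.coe_toReal hx (hg₁.2 x)).symm
      rw [hge, ← EReal.coe_sub]
      apply EReal.coe_le_coe_iff.mpr
      have hm := hφ₂ (x, (g x).toReal) (by simp only [hSdef, Set.mem_setOf_eq]; exact le_of_eq hge)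
      rw [hdec, ← hw] at hm
      have hinner : ⟪x, -(1 / β) • w⟫ = -(1 / β) * ⟪w, x⟫ := by
        rw [real_inner_smul_right, real_inner_comm]
      rw [hinner]
      have h6 : (u - ⟪w, x⟫) / β < (g x).toReal := by
        rw [div_lt_iff₀ hβpos]; linarith
      have h7 : -(1 / β) * ⟪w, x⟫ - (u - ⟪w, x⟫) / β = -u / β := by
        field_simp; ring
      linarith
  intro htop
  rw [htop] at hbound
  exact (EReal.coe_ne_top _) (top_le_iff.mp hbound)
set_option maxHeartbeats 1600000 in
theorem gap_partial_sums_bounded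
    {𝓗 𝓖 : Type*}
    [NormedAddCommGroup 𝓗] [InnerProductSpace ℝ 𝓗] [CompleteSpace 𝓗]
    [NormedAddCommGroup 𝓖] [InnerProductSpace ℝ 𝓖] [CompleteSpace 𝓖]
    (f : 𝓗 → EReal) (g : 𝓖 → EReal) (gs : 𝓖 → EReal)
    (hf₁ : EProper f) (hf₂ : EConvex f) (hf₃ : LowerSemicontinuous f)
    (hg₁ : EProper g) (hg₂ : EConvex g) (hg₃ : LowerSemicontinuous g)
    (hgs : gs = EConj g)
    (L : 𝓗 →L[ℝ] 𝓖) (hL : L ≠ 0)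
    (τ σ θ : ℝ) (hτ : 0 < τ) (hσ : 0 < σ)
    (hθ : 1 / 2 ≤ θ) (hstep : τ * σ * ‖L‖ ^ 2 ≤ 4 / (1 + 2 * θ))
    (hstrict : 1 / 2 < θ ∨ τ * σ * ‖L‖ ^ 2 < 4 / (1 + 2 * θ))
    (xstar : 𝓗) (ystar : 𝓖)
    (hkkt₁ : -((ContinuousLinearMap.adjoint L) ystar) ∈ ESubdiff f xstar)
    (hkkt₂ : L xstar ∈ ESubdiff gs ystar)
    (x : ℕ → 𝓗) (y : ℕ → 𝓖)
    (hx : ∀ k : ℕ, IsProx τ f (x k - τ • (ContinuousLinearMap.adjoint L) (y k)) (x (k + 1)))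
    (hy : ∀ k : ℕ,
      IsProx σ gs (y k + σ • L (x (k + 1) + θ • (x (k + 1) - x k))) (y (k + 1)))
    (F : ℕ → EReal)
    (hF : ∀ k : ℕ, F k = f (x (k + 1)) - f xstar
      + ((⟪(ContinuousLinearMap.adjoint L) ystar, x (k + 1) - xstar⟫ : ℝ) : EReal))
    (G : ℕ → EReal)
    (hG : ∀ k : ℕ, G k = gs (y (k + 1)) - gs ystar
      - ((⟪L xstar, y (k + 1) - ystar⟫ : ℝ) : EReal))
    (V : ℕ → EReal)
    (hV : ∀ k : ℕ, V k = (θ : EReal) * F k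
      + ((1 / (2 * τ) * ‖x (k + 1) - xstar‖ ^ 2
        + 1 / (2 * σ) * ‖y k - ystar + (σ * θ) • (L (x (k + 1)) - L (x k))‖ ^ 2
        + θ / (2 * τ) * ‖x (k + 1) - x k‖ ^ 2
        - σ * (4 * θ ^ 2 + 1) / 16 * ‖L (x (k + 1)) - L (x k)‖ ^ 2 : ℝ) : EReal))
    :
    ∀ K : ℕ, 0 < K →
      0 ≤ ∑ k ∈ Finset.range K, (F k + G k) ∧
      ∑ k ∈ Finset.range K, (F k + G k) ≤ V 0 := by
  classical
  set L' := ContinuousLinearMap.adjoint L with hL'def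
  -- step size in A-form
  set A := 1 / τ with hAdef
  set B := 1 / σ with hBdef
  have hA : 0 < A := by rw [hAdef]; positivity
  have hB : 0 < B := by rw [hBdef]; positivity
  have hθ1 : (0:ℝ) < 1 + 2 * θ := by linarith
  have hstep1 : τ * σ * ‖L‖ ^ 2 * (1 + 2 * θ) ≤ 4 := by
    rw [le_div_iff₀ hθ1] at hstep; linarith
  have hstepA : σ * ‖L‖ ^ 2 * (2 * θ + 1) ≤ 4 * A := by
    rw [hAdef, show (4:ℝ) * (1 / τ) = 4 / τ by ring, le_div_iff₀ hτ]
    nlinarith [hstep1]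
  -- properness of gs
  have hgsbot : ∀ y', gs y' ≠ ⊥ := fun y' => hgs ▸ econj_ne_bot hg₁ y'
  have hgsconv : EConvex gs := hgs ▸ econj_convex hg₁.2
  obtain ⟨y₀, hy₀⟩ : ∃ y', gs y' ≠ ⊤ := hgs ▸ econj_exists_ne_top hg₁ hg₂ hg₃
  -- f xstar and gs ystar are finite
  obtain ⟨x₀, hx₀⟩ := hf₁.1
  have hfstar_top : f xstar ≠ ⊤ := by
    intro hh
    have h1 := hkkt₁ x₀
    rw [hh] at h1
    rw [EReal.top_add_coe] at h1
    exact hx₀ (top_le_iff.mp h1)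
  have hfse : f xstar = (((f xstar).toReal : ℝ) : EReal) :=
    (EReal.coe_toReal hfstar_top (hf₁.2 xstar)).symm
  set fs := (f xstar).toReal with hfsdef
  have hgstar_top : gs ystar ≠ ⊤ := by
    intro hh
    have h1 := hkkt₂ y₀
    rw [hh] at h1
    rw [EReal.top_add_coe] at h1
    exact hy₀ (top_le_iff.mp h1)
  have hgse : gs ystar = ((gs ystar).toReal : EReal) :=
    (EReal.coe_toReal hgstar_top (hgsbot ystar)).symm
  set gss := (gs ystar).toReal with hgssdef
  -- iterates have finite values
  have hfx_top : ∀ k, f (x (k + 1)) ≠ ⊤ := by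
    intro k hh
    have h1 := hx k xstar
    rw [hh, hfse, EReal.top_add_coe, ← EReal.coe_add] at h1
    exact (EReal.coe_ne_top _) (top_le_iff.mp h1)
  have hfre : ∀ k, f (x (k + 1)) = (((f (x (k + 1))).toReal : ℝ) : EReal) :=
    fun k => (EReal.coe_toReal (hfx_top k) (hf₁.2 _)).symm
  set fr : ℕ → ℝ := fun k => (f (x (k + 1))).toReal with hfrdef
  have hgx_top : ∀ k, gs (y (k + 1)) ≠ ⊤ := by
    intro k hh
    have h1 := hy k ystar
    rw [hh, hgse, EReal.top_add_coe, ← EReal.coe_add] at h1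
    exact (EReal.coe_ne_top _) (top_le_iff.mp h1)
  have hgre : ∀ k, gs (y (k + 1)) = ((gs (y (k + 1))).toReal : EReal) :=
    fun k => (EReal.coe_toReal (hgx_top k) (hgsbot _)).symm
  set gr : ℕ → ℝ := fun k => (gs (y (k + 1))).toReal with hgrdef
  -- real versions of F, G, V
  set Fr : ℕ → ℝ := fun k => fr k - fs + ⟪L' ystar, x (k + 1) - xstar⟫ with hFrdef
  set Gr : ℕ → ℝ := fun k => gr k - gss - ⟪L xstar, y (k + 1) - ystar⟫ with hGrdef
  have hFe : ∀ k, F k = ((Fr k : ℝ) : EReal) := by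
    intro k
    rw [hF k, hfre k, hfse, ← EReal.coe_sub, ← EReal.coe_add]
  have hGe : ∀ k, G k = ((Gr k : ℝ) : EReal) := by
    intro k
    rw [hG k, hgre k, hgse, ← EReal.coe_sub, ← EReal.coe_sub]
  set Vr : ℕ → ℝ := fun k => θ * Fr k + (1 / (2 * τ) * ‖x (k + 1) - xstar‖ ^ 2
        + 1 / (2 * σ) * ‖y k - ystar + (σ * θ) • (L (x (k + 1)) - L (x k))‖ ^ 2
        + θ / (2 * τ) * ‖x (k + 1) - x k‖ ^ 2
        - σ * (4 * θ ^ 2 + 1) / 16 * ‖L (x (k + 1)) - L (x k)‖ ^ 2) with hVrdef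
  have hVe : ∀ k, V k = ((Vr k : ℝ) : EReal) := by
    intro k
    rw [hV k, hFe k, ← EReal.coe_mul, ← EReal.coe_add]
  -- real subgradient inequalities
  have hfsubr : ∀ k (z : 𝓗) (c : ℝ), f z = ((c : ℝ) : EReal) →
      fr k + ⟪(1 / τ) • (x k - τ • L' (y k) - x (k + 1)), z - x (k + 1)⟫ ≤ c := by
    intro k z c hz
    have h1 := prox_subgrad hτ hf₂ hf₁.2 (hx k) (hfx_top k) z
    rw [hfre k, hz, ← EReal.coe_add, EReal.coe_le_coe_iff] at h1
    exact h1
  have hgsubr : ∀ k (z : 𝓖) (c : ℝ), gs z = ((c : ℝ) : EReal) →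
      gr k + ⟪(1 / σ) • (y k + σ • L (x (k + 1) + θ • (x (k + 1) - x k)) - y (k + 1)),
        z - y (k + 1)⟫ ≤ c := by
    intro k z c hz
    have h1 := prox_subgrad hσ hgsconv hgsbot (hy k) (hgx_top k) z
    rw [hgre k, hz, ← EReal.coe_add, EReal.coe_le_coe_iff] at h1
    exact h1
  -- nonnegativity of Fr and Gr
  have hFrnn : ∀ k, 0 ≤ Fr k := by
    intro k
    have h1 := hkkt₁ (x (k + 1))
    rw [hfse, hfre k, ← EReal.coe_add, EReal.coe_le_coe_iff] at h1
    have h2 : ⟪-(L' ystar), x (k + 1) - xstar⟫ = -⟪L' ystar, x (k + 1) - xstar⟫ :=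
      inner_neg_left _ _
    simp only [hFrdef]
    rw [hL'def] at h2 ⊢
    linarith [h1, h2.symm.le, h2.le]
  have hGrnn : ∀ k, 0 ≤ Gr k := by
    intro k
    have h1 := hkkt₂ (y (k + 1))
    rw [hgse, hgre k, ← EReal.coe_add, EReal.coe_le_coe_iff] at h1
    simp only [hGrdef]
    linarith [h1]
    -- flip lemma for inner products with L
  have flipL : ∀ (v : 𝓗) (w : 𝓖), ⟪L v, w⟫ = ⟪w, L v⟫ := fun v w => real_inner_comm _ _
  -- operator norm squared bounds
  have hopsq : ∀ v : 𝓗, ‖L v‖ ^ 2 ≤ ‖L‖ ^ 2 * ‖v‖ ^ 2 := by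
    intro v
    have h1 := L.le_opNorm v
    nlinarith [norm_nonneg (L v), norm_nonneg v, norm_nonneg L]
  -- the per-step descent inequality
  have hdesc : ∀ k, Fr k + Gr k + Vr (k + 1) ≤ Vr k := by
    intro k
    -- E1
    have hE1 : ‖x (k + 2) - x (k + 1)‖ ^ 2 * (1 / τ)
        + ⟪y (k + 1) - ystar, L (x (k + 2)) - L (x (k + 1))⟫ ≤ Fr k - Fr (k + 1) := by
      have h1 := hfsubr (k + 1) (x (k + 1)) (fr k) (hfre k)
      simp only [show k + 1 + 1 = k + 2 from rfl] at h1
      have h2 : ⟪(1 / τ) • (x (k + 1) - τ • L' (y (k + 1)) - x (k + 2)), x (k + 1) - x (k + 2)⟫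
          = ‖x (k + 2) - x (k + 1)‖ ^ 2 * (1 / τ)
            + ⟪y (k + 1), L (x (k + 2)) - L (x (k + 1))⟫ := by
        rw [show x (k + 1) - τ • L' (y (k + 1)) - x (k + 2)
              = -(x (k + 2) - x (k + 1)) - τ • L' (y (k + 1)) by abel,
            show x (k + 1) - x (k + 2) = -(x (k + 2) - x (k + 1)) by abel]
        rw [real_inner_smul_left, inner_sub_left, inner_neg_neg,
          real_inner_self_eq_norm_sq, real_inner_smul_left, inner_neg_right,
          hL'def, ContinuousLinearMap.adjoint_inner_left, map_sub]
        field_simp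
        ring
      rw [h2] at h1
      have h3 : ⟪L' ystar, x (k + 1) - xstar⟫ - ⟪L' ystar, x (k + 2) - xstar⟫
          = -⟪ystar, L (x (k + 2)) - L (x (k + 1))⟫ := by
        rw [← inner_sub_right,
          show (x (k + 1) - xstar) - (x (k + 2) - xstar) = -(x (k + 2) - x (k + 1)) by abel,
          inner_neg_right, hL'def, ContinuousLinearMap.adjoint_inner_left, map_sub]
      have h4 : ⟪y (k + 1) - ystar, L (x (k + 2)) - L (x (k + 1))⟫
          = ⟪y (k + 1), L (x (k + 2)) - L (x (k + 1))⟫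
            - ⟪ystar, L (x (k + 2)) - L (x (k + 1))⟫ := inner_sub_left _ _ _
      simp only [hFrdef, show k + 1 + 1 = k + 2 from rfl]
      linarith [h1, h3, h4]
    -- E2
    have hE2 : Fr (k + 1) ≤ (‖x (k + 1) - xstar‖ ^ 2 - ‖x (k + 2) - x (k + 1)‖ ^ 2
          - ‖x (k + 2) - xstar‖ ^ 2) * (1 / τ) / 2
        - (⟪y (k + 1) - ystar, L (x (k + 1)) - L xstar⟫
          + ⟪y (k + 1) - ystar, L (x (k + 2)) - L (x (k + 1))⟫) := by
      have h1 := hfsubr (k + 1) xstar fs hfse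
      simp only [show k + 1 + 1 = k + 2 from rfl] at h1
      have hbq : ⟪x (k + 2) - x (k + 1), x (k + 2) - xstar⟫
          = (‖x (k + 2) - x (k + 1)‖ ^ 2 + ‖x (k + 2) - xstar‖ ^ 2
            - ‖x (k + 1) - xstar‖ ^ 2) / 2 := by
        have h5 := norm_sub_sq_real (x (k + 2) - xstar) (x (k + 2) - x (k + 1))
        rw [show (x (k + 2) - xstar) - (x (k + 2) - x (k + 1)) = x (k + 1) - xstar by abel] at h5
        rw [real_inner_comm]
        linarith [h5]
      have h2 : ⟪(1 / τ) • (x (k + 1) - τ • L' (y (k + 1)) - x (k + 2)), xstar - x (k + 2)⟫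
          = (‖x (k + 2) - x (k + 1)‖ ^ 2 + ‖x (k + 2) - xstar‖ ^ 2
              - ‖x (k + 1) - xstar‖ ^ 2) * (1 / τ) / 2
            + ⟪y (k + 1), L (x (k + 2)) - L xstar⟫ := by
        rw [show x (k + 1) - τ • L' (y (k + 1)) - x (k + 2)
              = -(x (k + 2) - x (k + 1)) - τ • L' (y (k + 1)) by abel,
            show xstar - x (k + 2) = -(x (k + 2) - xstar) by abel]
        rw [real_inner_smul_left, inner_sub_left, inner_neg_neg, real_inner_smul_left,
          inner_neg_right, hL'def, ContinuousLinearMap.adjoint_inner_left, map_sub, hbq]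
        field_simp
        ring
      rw [h2] at h1
      have h3 : ⟪L' ystar, x (k + 2) - xstar⟫ = ⟪ystar, L (x (k + 2)) - L xstar⟫ := by
        rw [hL'def, ContinuousLinearMap.adjoint_inner_left, map_sub]
      have h4 : ⟪y (k + 1) - ystar, L (x (k + 1)) - L xstar⟫
            + ⟪y (k + 1) - ystar, L (x (k + 2)) - L (x (k + 1))⟫
          = ⟪y (k + 1), L (x (k + 2)) - L xstar⟫ - ⟪ystar, L (x (k + 2)) - L xstar⟫ := by
        rw [← inner_add_right,
          show (L (x (k + 1)) - L xstar) + (L (x (k + 2)) - L (x (k + 1)))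
            = L (x (k + 2)) - L xstar by abel, inner_sub_left]
      simp only [hFrdef, show k + 1 + 1 = k + 2 from rfl]
      linarith [h1, h3, h4]
    -- E3
    have hE3 : Gr k ≤ (⟪y k - ystar, y (k + 1) - ystar⟫ - ‖y (k + 1) - ystar‖ ^ 2) * (1 / σ)
        + ⟪y (k + 1) - ystar, L (x (k + 1)) - L xstar⟫
        + θ * ⟪y (k + 1) - ystar, L (x (k + 1)) - L (x k)⟫ := by
      have h1 := hgsubr k ystar gss hgse
      have h2 : ⟪(1 / σ) • (y k + σ • L (x (k + 1) + θ • (x (k + 1) - x k)) - y (k + 1)),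
            ystar - y (k + 1)⟫
          = (‖y (k + 1) - ystar‖ ^ 2 - ⟪y k - ystar, y (k + 1) - ystar⟫) * (1 / σ)
            - ⟪y (k + 1) - ystar, L (x (k + 1))⟫
            - θ * ⟪y (k + 1) - ystar, L (x (k + 1)) - L (x k)⟫ := by
        rw [show y k + σ • L (x (k + 1) + θ • (x (k + 1) - x k)) - y (k + 1)
              = ((y k - ystar) - (y (k + 1) - ystar))
                + σ • L (x (k + 1) + θ • (x (k + 1) - x k)) by abel,
            show ystar - y (k + 1) = -(y (k + 1) - ystar) by abel]
        rw [map_add, map_smul, map_sub]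
        rw [real_inner_smul_left, inner_neg_right, inner_add_left, inner_sub_left,
          real_inner_smul_left, inner_add_left, real_inner_smul_left]
        rw [real_inner_self_eq_norm_sq, flipL (x (k + 1)),
          real_inner_comm (L (x (k + 1)) - L (x k)) (y (k + 1) - ystar)]
        field_simp
        ring
      rw [h2] at h1
      have e1 : ⟪y (k + 1) - ystar, L (x (k + 1)) - L xstar⟫
          = ⟪y (k + 1) - ystar, L (x (k + 1))⟫ - ⟪y (k + 1) - ystar, L xstar⟫ :=
        inner_sub_right _ _ _
      have e2 : ⟪L xstar, y (k + 1) - ystar⟫ = ⟪y (k + 1) - ystar, L xstar⟫ :=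
        real_inner_comm _ _
      simp only [hGrdef]
      linarith [h1, e1, e2]
    -- E5
    have hE5 : -(⟪x (k + 1) - x k, x (k + 2) - x (k + 1)⟫ * (1 / τ))
        - ⟪y k - ystar, L (x (k + 2)) - L (x (k + 1))⟫ ≤ Fr (k + 1) - Fr k := by
      have h1 := hfsubr k (x (k + 2)) (fr (k + 1)) (hfre (k + 1))
      have h2 : ⟪(1 / τ) • (x k - τ • L' (y k) - x (k + 1)), x (k + 2) - x (k + 1)⟫
          = -(⟪x (k + 1) - x k, x (k + 2) - x (k + 1)⟫ * (1 / τ))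
            - ⟪y k, L (x (k + 2)) - L (x (k + 1))⟫ := by
        rw [show x k - τ • L' (y k) - x (k + 1)
              = -(x (k + 1) - x k) - τ • L' (y k) by abel]
        rw [real_inner_smul_left, inner_sub_left, inner_neg_left, real_inner_smul_left,
          hL'def, ContinuousLinearMap.adjoint_inner_left, map_sub]
        field_simp
      rw [h2] at h1
      have h3 : ⟪L' ystar, x (k + 2) - xstar⟫ - ⟪L' ystar, x (k + 1) - xstar⟫
          = ⟪ystar, L (x (k + 2)) - L (x (k + 1))⟫ := by
        rw [← inner_sub_right,
          show (x (k + 2) - xstar) - (x (k + 1) - xstar) = x (k + 2) - x (k + 1) by abel,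
          hL'def, ContinuousLinearMap.adjoint_inner_left, map_sub]
      have h4 : ⟪y k - ystar, L (x (k + 2)) - L (x (k + 1))⟫
          = ⟪y k, L (x (k + 2)) - L (x (k + 1))⟫
            - ⟪ystar, L (x (k + 2)) - L (x (k + 1))⟫ := inner_sub_left _ _ _
      simp only [hFrdef, show k + 1 + 1 = k + 2 from rfl]
      linarith [h1, h3, h4]
    -- quadratic facts
    have hqq : ‖x (k + 2) - xstar‖ ^ 2 = ‖x (k + 1) - xstar‖ ^ 2
        + 2 * ⟪x (k + 1) - xstar, x (k + 2) - x (k + 1)⟫ + ‖x (k + 2) - x (k + 1)‖ ^ 2 := by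
      rw [show x (k + 2) - xstar = (x (k + 1) - xstar) + (x (k + 2) - x (k + 1)) by abel,
        norm_add_sq_real]
    have hu : (0:ℝ) ≤ ‖x (k + 1) - x k‖ ^ 2
        + 2 * ⟪x (k + 1) - x k, x (k + 2) - x (k + 1)⟫ + ‖x (k + 2) - x (k + 1)‖ ^ 2 := by
      have h1 := norm_add_sq_real (x (k + 1) - x k) (x (k + 2) - x (k + 1))
      have h2 := sq_nonneg ‖(x (k + 1) - x k) + (x (k + 2) - x (k + 1))‖
      linarith
    have hv : (0:ℝ) ≤ ‖x (k + 1) - x k‖ ^ 2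
        - 2 * ⟪x (k + 1) - x k, x (k + 2) - x (k + 1)⟫ + ‖x (k + 2) - x (k + 1)‖ ^ 2 := by
      have h1 := norm_sub_sq_real (x (k + 1) - x k) (x (k + 2) - x (k + 1))
      have h2 := sq_nonneg ‖(x (k + 1) - x k) - (x (k + 2) - x (k + 1))‖
      linarith
    have hcsu : ‖L (x (k + 1)) - L (x k)‖ ^ 2
        + 2 * ⟪L (x (k + 1)) - L (x k), L (x (k + 2)) - L (x (k + 1))⟫
        + ‖L (x (k + 2)) - L (x (k + 1))‖ ^ 2
        ≤ ‖L‖ ^ 2 * (‖x (k + 1) - x k‖ ^ 2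
          + 2 * ⟪x (k + 1) - x k, x (k + 2) - x (k + 1)⟫ + ‖x (k + 2) - x (k + 1)‖ ^ 2) := by
      have h1 := hopsq ((x (k + 1) - x k) + (x (k + 2) - x (k + 1)))
      rw [show L ((x (k + 1) - x k) + (x (k + 2) - x (k + 1)))
            = (L (x (k + 1)) - L (x k)) + (L (x (k + 2)) - L (x (k + 1))) by
          rw [map_add, map_sub, map_sub]] at h1
      rw [norm_add_sq_real, norm_add_sq_real] at h1
      linarith
    have hcsv : ‖L (x (k + 1)) - L (x k)‖ ^ 2
        - 2 * ⟪L (x (k + 1)) - L (x k), L (x (k + 2)) - L (x (k + 1))⟫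
        + ‖L (x (k + 2)) - L (x (k + 1))‖ ^ 2
        ≤ ‖L‖ ^ 2 * (‖x (k + 1) - x k‖ ^ 2
          - 2 * ⟪x (k + 1) - x k, x (k + 2) - x (k + 1)⟫ + ‖x (k + 2) - x (k + 1)‖ ^ 2) := by
      have h1 := hopsq ((x (k + 1) - x k) - (x (k + 2) - x (k + 1)))
      rw [show L ((x (k + 1) - x k) - (x (k + 2) - x (k + 1)))
            = (L (x (k + 1)) - L (x k)) - (L (x (k + 2)) - L (x (k + 1))) by
          rw [map_sub, map_sub, map_sub]] at h1
      rw [norm_sub_sq_real (L (x (k + 1)) - L (x k)) (L (x (k + 2)) - L (x (k + 1))),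
        norm_sub_sq_real (x (k + 1) - x k) (x (k + 2) - x (k + 1))] at h1
      linarith
    -- the Young-inequality square
    have hY : (0:ℝ) ≤ (‖y k - ystar‖ ^ 2 - 2 * ⟪y k - ystar, y (k + 1) - ystar⟫
          + ‖y (k + 1) - ystar‖ ^ 2) * (1 / σ) / 2
        + σ * θ ^ 2 / 2 * ‖L (x (k + 1)) - L (x k)‖ ^ 2
        + σ / 8 * ‖L (x (k + 2)) - L (x (k + 1))‖ ^ 2
        - θ * (⟪y (k + 1) - ystar, L (x (k + 1)) - L (x k)⟫
            - ⟪y k - ystar, L (x (k + 1)) - L (x k)⟫)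
        + (⟪y (k + 1) - ystar, L (x (k + 2)) - L (x (k + 1))⟫
            - ⟪y k - ystar, L (x (k + 2)) - L (x (k + 1))⟫) / 2
        - σ * θ / 2 * ⟪L (x (k + 1)) - L (x k), L (x (k + 2)) - L (x (k + 1))⟫ := by
      have h0 : (0:ℝ) ≤ 1 / (2 * σ) * ‖((y (k + 1) - ystar) - (y k - ystar))
          + ((σ / 2) • (L (x (k + 2)) - L (x (k + 1)))
            - (σ * θ) • (L (x (k + 1)) - L (x k)))‖ ^ 2 := by positivity
      have heq : 1 / (2 * σ) * ‖((y (k + 1) - ystar) - (y k - ystar))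
          + ((σ / 2) • (L (x (k + 2)) - L (x (k + 1)))
            - (σ * θ) • (L (x (k + 1)) - L (x k)))‖ ^ 2
          = (‖y k - ystar‖ ^ 2 - 2 * ⟪y k - ystar, y (k + 1) - ystar⟫
              + ‖y (k + 1) - ystar‖ ^ 2) * (1 / σ) / 2
            + σ * θ ^ 2 / 2 * ‖L (x (k + 1)) - L (x k)‖ ^ 2
            + σ / 8 * ‖L (x (k + 2)) - L (x (k + 1))‖ ^ 2
            - θ * (⟪y (k + 1) - ystar, L (x (k + 1)) - L (x k)⟫
                - ⟪y k - ystar, L (x (k + 1)) - L (x k)⟫)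
            + (⟪y (k + 1) - ystar, L (x (k + 2)) - L (x (k + 1))⟫
                - ⟪y k - ystar, L (x (k + 2)) - L (x (k + 1))⟫) / 2
            - σ * θ / 2 * ⟪L (x (k + 1)) - L (x k), L (x (k + 2)) - L (x (k + 1))⟫ := by
        rw [norm_add_sq_real, norm_sub_sq_real ((σ / 2) • (L (x (k + 2)) - L (x (k + 1))))
            ((σ * θ) • (L (x (k + 1)) - L (x k)))]
        rw [norm_sub_sq_real (y (k + 1) - ystar) (y k - ystar)]
        rw [inner_sub_left (𝕜 := ℝ) (y (k + 1) - ystar) (y k - ystar)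
            ((σ / 2) • (L (x (k + 2)) - L (x (k + 1))) - (σ * θ) • (L (x (k + 1)) - L (x k)))]
        rw [inner_sub_right (𝕜 := ℝ) (y (k + 1) - ystar)
            ((σ / 2) • (L (x (k + 2)) - L (x (k + 1)))) ((σ * θ) • (L (x (k + 1)) - L (x k)))]
        rw [inner_sub_right (𝕜 := ℝ) (y k - ystar)
            ((σ / 2) • (L (x (k + 2)) - L (x (k + 1)))) ((σ * θ) • (L (x (k + 1)) - L (x k)))]
        simp only [real_inner_smul_left, real_inner_smul_right, norm_smul,
          Real.norm_eq_abs, mul_pow, sq_abs]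
        rw [real_inner_comm (y (k + 1) - ystar) (y k - ystar),
          real_inner_comm (L (x (k + 2)) - L (x (k + 1))) (L (x (k + 1)) - L (x k))]
        field_simp
        ring
      rw [heq] at h0
      exact h0
    -- expansion of the Lyapunov terms
    have hVk : Vr k = θ * Fr k + 1 / τ / 2 * ‖x (k + 1) - xstar‖ ^ 2
        + 1 / σ / 2 * ‖y k - ystar‖ ^ 2
        + θ * ⟪y k - ystar, L (x (k + 1)) - L (x k)⟫
        + σ * θ ^ 2 / 2 * ‖L (x (k + 1)) - L (x k)‖ ^ 2
        + θ * (1 / τ) / 2 * ‖x (k + 1) - x k‖ ^ 2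
        - σ * (4 * θ ^ 2 + 1) / 16 * ‖L (x (k + 1)) - L (x k)‖ ^ 2 := by
      simp only [hVrdef]
      rw [norm_add_sq_real (y k - ystar) ((σ * θ) • (L (x (k + 1)) - L (x k))),
        real_inner_smul_right, norm_smul, Real.norm_eq_abs, mul_pow, sq_abs]
      field_simp
      ring
    have hVk1 : Vr (k + 1) = θ * Fr (k + 1) + 1 / τ / 2 * ‖x (k + 2) - xstar‖ ^ 2
        + 1 / σ / 2 * ‖y (k + 1) - ystar‖ ^ 2
        + θ * ⟪y (k + 1) - ystar, L (x (k + 2)) - L (x (k + 1))⟫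
        + σ * θ ^ 2 / 2 * ‖L (x (k + 2)) - L (x (k + 1))‖ ^ 2
        + θ * (1 / τ) / 2 * ‖x (k + 2) - x (k + 1)‖ ^ 2
        - σ * (4 * θ ^ 2 + 1) / 16 * ‖L (x (k + 2)) - L (x (k + 1))‖ ^ 2 := by
      simp only [hVrdef, show k + 1 + 1 = k + 2 from rfl]
      rw [norm_add_sq_real (y (k + 1) - ystar) ((σ * θ) • (L (x (k + 2)) - L (x (k + 1)))),
        real_inner_smul_right, norm_smul, Real.norm_eq_abs, mul_pow, sq_abs]
      field_simp
      ring
    rw [hVk, hVk1]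
    have hcert := cp_cert σ θ ‖L‖ (1 / τ) (1 / σ) hσ hθ (norm_nonneg L) (by positivity)
      hstepA (Fr k) (Fr (k + 1)) (Gr k)
      (‖x (k + 1) - x k‖ ^ 2) (⟪x (k + 1) - x k, x (k + 2) - x (k + 1)⟫)
      (‖x (k + 2) - x (k + 1)‖ ^ 2) (⟪x (k + 1) - xstar, x (k + 2) - x (k + 1)⟫)
      (‖x (k + 1) - xstar‖ ^ 2) (‖x (k + 2) - xstar‖ ^ 2)
      (‖y k - ystar‖ ^ 2) (⟪y k - ystar, y (k + 1) - ystar⟫) (‖y (k + 1) - ystar‖ ^ 2)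
      (⟪y (k + 1) - ystar, L (x (k + 1)) - L (x k)⟫)
      (⟪y (k + 1) - ystar, L (x (k + 2)) - L (x (k + 1))⟫)
      (⟪y (k + 1) - ystar, L (x (k + 1)) - L xstar⟫)
      (⟪y k - ystar, L (x (k + 1)) - L (x k)⟫)
      (⟪y k - ystar, L (x (k + 2)) - L (x (k + 1))⟫)
      (‖L (x (k + 1)) - L (x k)‖ ^ 2)
      (⟪L (x (k + 1)) - L (x k), L (x (k + 2)) - L (x (k + 1))⟫)
      (‖L (x (k + 2)) - L (x (k + 1))‖ ^ 2)
      hqq hE1 hE2 hE3 hE5 hY hu hv hcsu hcsv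
    linarith [hcert]
  -- nonnegativity of the Lyapunov function
  have hVnn : ∀ k, 0 ≤ Vr k := by
    intro k
    have hVk : Vr k = θ * Fr k + 1 / τ / 2 * ‖x (k + 1) - xstar‖ ^ 2
        + 1 / σ / 2 * ‖y k - ystar + (σ * θ) • (L (x (k + 1)) - L (x k))‖ ^ 2
        + θ * (1 / τ) / 2 * ‖x (k + 1) - x k‖ ^ 2
        - σ * (4 * θ ^ 2 + 1) / 16 * ‖L (x (k + 1)) - L (x k)‖ ^ 2 := by
      simp only [hVrdef]; ring
    rw [hVk]
    have hcs : ‖L (x (k + 1)) - L (x k)‖ ^ 2 ≤ ‖L‖ ^ 2 * ‖x (k + 1) - x k‖ ^ 2 := by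
      have h1 := hopsq (x (k + 1) - x k)
      rw [map_sub] at h1
      exact h1
    have h := cp_Vnonneg σ θ ‖L‖ (1 / τ) (1 / σ) hσ hθ (by positivity) (by positivity)
      hstepA (Fr k) (‖x (k + 1) - x k‖ ^ 2) (‖x (k + 1) - xstar‖ ^ 2)
      (‖y k - ystar + (σ * θ) • (L (x (k + 1)) - L (x k))‖ ^ 2)
      (‖L (x (k + 1)) - L (x k)‖ ^ 2)
      (hFrnn k) (sq_nonneg _) (sq_nonneg _) (sq_nonneg _) hcs
    linarith [h]
  -- telescoping
  have htel : ∀ K : ℕ, (∑ k ∈ Finset.range K, (Fr k + Gr k)) + Vr K ≤ Vr 0 := by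
    intro K
    induction K with
    | zero => simp
    | succ n ih =>
      rw [Finset.sum_range_succ]
      have := hdesc n
      linarith
  -- conclusion
  intro K _
  have hsumeq : ∑ k ∈ Finset.range K, (F k + G k)
      = (((∑ k ∈ Finset.range K, (Fr k + Gr k) : ℝ)) : EReal) := by
    have h' : (((∑ k ∈ Finset.range K, (Fr k + Gr k) : ℝ)) : EReal)
        = ∑ k ∈ Finset.range K, (((Fr k + Gr k : ℝ)) : EReal) :=
      map_sum (⟨⟨Real.toEReal, EReal.coe_zero⟩, EReal.coe_add⟩ : ℝ →+ EReal)
        (fun k => Fr k + Gr k) (Finset.range K)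
    rw [h']
    exact Finset.sum_congr rfl (fun k _ => by
      rw [hFe k, hGe k]; exact (EReal.coe_add (Fr k) (Gr k)).symm)
  constructor
  · rw [hsumeq]
    have h1 : (0:ℝ) ≤ ∑ k ∈ Finset.range K, (Fr k + Gr k) :=
      Finset.sum_nonneg (fun k _ => by linarith [hFrnn k, hGrnn k])
    exact_mod_cast h1
  · rw [hsumeq, hVe 0]
    have h2 : (∑ k ∈ Finset.range K, (Fr k + Gr k)) ≤ Vr 0 := by
      linarith [htel K, hVnn K]
    exact_mod_cast h2
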